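/- Let X be a compact subset of ℝ^d and let X_n = {x_1,…,x_n} be the n-point prefix of a coffee-house (greedy maximin) sequence: x_1 ∈ X arbitrary and x_{k+1} ∈ argmax_{x∈X} d(x, X_k). Then for all n ≥ 2, PR(X_n) ≥ (1/2) PR*_n, i.e., 1/2 ≤ PR(X_n)/PR*_n ≤ 1, where PR*_n = max over all n-point sets Z ⊆ X of PR(Z). This holds irrespective of the choice of x_1. -/

import Mathlib

open Metric

/-- The packing radius `PR(A) = (1/2) min{dist p q : p ≠ q ∈ A}` of a design `A`. -/
noncomputable def packRad {d : ℕ} (A : Set (EuclideanSpace ℝ (Fin d))) : ℝ :=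
  sInf {v : ℝ | ∃ p ∈ A, ∃ q ∈ A, p ≠ q ∧ v = dist p q} / 2

/-- The maximal packing radius over `n`-point designs in `X`. -/
noncomputable def packRadStar {d : ℕ} (X : Set (EuclideanSpace ℝ (Fin d))) (n : ℕ) : ℝ :=
  sSup {v : ℝ | ∃ Z : Finset (EuclideanSpace ℝ (Fin d)),
    ↑Z ⊆ X ∧ Z.card = n ∧ v = packRad (↑Z : Set (EuclideanSpace ℝ (Fin d)))}

lemma distSet_bddBelow {d : ℕ} (A : Set (EuclideanSpace ℝ (Fin d))) :
    BddBelow {v : ℝ | ∃ p ∈ A, ∃ q ∈ A, p ≠ q ∧ v = dist p q} := by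
  refine ⟨0, ?_⟩
  rintro v ⟨p, -, q, -, -, rfl⟩
  exact dist_nonneg

/-- **50% optimality gap of coffee-house design for the packing radius.**  If `X_n` is
the `n`-point prefix of a coffee-house (greedy maximin) sequence in a compact `X ⊂ ℝ^d`
with nonempty interior, then `PR*_n / 2 ≤ PR(X_n) ≤ PR*_n` for all `n ≥ 2`, irrespective
of the choice of the first point. -/
theorem coffeeHouse_packRad_half_efficiency {d : ℕ}
    (X : Set (EuclideanSpace ℝ (Fin d))) (hX : IsCompact X)
    (hint : (interior X).Nonempty)
    (x : ℕ → EuclideanSpace ℝ (Fin d)) (hx0 : x 0 ∈ X)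
    (hgreedy : ∀ n : ℕ, 1 ≤ n → x n ∈ X ∧ ∀ y ∈ X,
      infDist y (x '' Set.Iio n) ≤ infDist (x n) (x '' Set.Iio n)) :
    ∀ n : ℕ, 2 ≤ n →
      packRadStar X n / 2 ≤ packRad (x '' Set.Iio n) ∧
      packRad (x '' Set.Iio n) ≤ packRadStar X n := by
  classical
  intro n hn
  have hmem : ∀ k, x k ∈ X := by
    intro k
    cases k with
    | zero => exact hx0
    | succ k => exact (hgreedy (k + 1) (Nat.succ_le_succ (Nat.zero_le k))).1
  rcases Nat.eq_zero_or_pos d with hd | hd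
  · -- degenerate case `d = 0`: the space is a subsingleton
    subst hd
    have hsub : ∀ p q : EuclideanSpace ℝ (Fin 0), p = q := fun p q => Subsingleton.elim p q
    have hpr : ∀ A : Set (EuclideanSpace ℝ (Fin 0)), packRad A = 0 := by
      intro A
      unfold packRad
      have hempty : {v : ℝ | ∃ p ∈ A, ∃ q ∈ A, p ≠ q ∧ v = dist p q} = ∅ := by
        ext v
        simp only [Set.mem_setOf_eq, Set.mem_empty_iff_false, iff_false]
        rintro ⟨p, -, q, -, hpq, -⟩
        exact hpq (hsub p q)
      rw [hempty, Real.sInf_empty]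
      norm_num
    have hstar : packRadStar X n = 0 := by
      unfold packRadStar
      have hempty : {v : ℝ | ∃ Z : Finset (EuclideanSpace ℝ (Fin 0)),
          ↑Z ⊆ X ∧ Z.card = n ∧ v = packRad (↑Z : Set (EuclideanSpace ℝ (Fin 0)))} = ∅ := by
        ext v
        simp only [Set.mem_setOf_eq, Set.mem_empty_iff_false, iff_false]
        rintro ⟨Z, -, hcard, -⟩
        have : Z.card ≤ 1 := Finset.card_le_one.mpr (fun a _ b _ => hsub a b)
        omega
      rw [hempty, Real.sSup_empty]
    rw [hstar, hpr]
    norm_num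
  -- main case `1 ≤ d`
  -- `X` is infinite since it contains a ball
  obtain ⟨c, hc⟩ := hint
  obtain ⟨ε, hε, hball⟩ := Metric.isOpen_iff.1 isOpen_interior c hc
  have hXinf : X.Infinite := by
    set v : EuclideanSpace ℝ (Fin d) := EuclideanSpace.single ⟨0, hd⟩ (1 : ℝ) with hv
    have hvn : ‖v‖ = 1 := by rw [hv, EuclideanSpace.norm_single]; simp
    have hkey : ∀ t : ℕ, dist (c + (ε / (t + 2)) • v) c = ε / (t + 2) := by
      intro t
      have h2 : (0 : ℝ) < (t : ℝ) + 2 := by positivity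
      rw [dist_eq_norm]
      have : c + (ε / (t + 2)) • v - c = (ε / (t + 2)) • v := by abel
      rw [this, norm_smul, hvn, mul_one, Real.norm_eq_abs, abs_of_pos (by positivity)]
    refine Set.infinite_of_injective_forall_mem
      (f := fun t : ℕ => c + (ε / (t + 2)) • v) ?_ ?_
    · intro a b hab
      have h1 := congrArg (fun z => dist z c) hab
      simp only at h1
      rw [hkey a, hkey b] at h1
      have h2 : (((a : ℝ) + 2))⁻¹ = (((b : ℝ) + 2))⁻¹ := by
        rw [div_eq_mul_inv, div_eq_mul_inv] at h1
        exact mul_left_cancel₀ (ne_of_gt hε) h1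
      have h3 : (a : ℝ) + 2 = (b : ℝ) + 2 := inv_injective h2
      have h4 : (a : ℝ) = (b : ℝ) := by linarith
      exact_mod_cast h4
    · intro t
      have h2 : (0 : ℝ) < (t : ℝ) + 2 := by positivity
      have hlt : ε / (t + 2) < ε := by
        rw [div_lt_iff₀ h2]
        nlinarith
      have : c + (ε / (t + 2)) • v ∈ ball c ε := by
        rw [mem_ball, hkey t]
        exact hlt
      exact interior_subset (hball this)
  -- notation
  set S : ℕ → Set (EuclideanSpace ℝ (Fin d)) := fun k => x '' Set.Iio k with hS
  have hSfin : ∀ k, (S k).Finite := fun k => (Set.finite_Iio k).image x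
  have hSne : ∀ k, 1 ≤ k → (S k).Nonempty := fun k hk => ⟨x 0, ⟨0, Set.mem_Iio.mpr hk, rfl⟩⟩
  have hSsub : ∀ j k, j ≤ k → S j ⊆ S k := by
    intro j k hjk
    exact Set.image_mono (f := x) (fun i hi => lt_of_lt_of_le hi hjk)
  -- greedy points never repeat
  have hnotmem : ∀ k, 1 ≤ k → x k ∉ S k := by
    intro k hk hmemk
    obtain ⟨y, hyX, hyS⟩ := (hXinf.diff (hSfin k)).nonempty
    obtain ⟨w, hw, hwd⟩ := (hSfin k).isCompact.exists_infDist_eq_dist (hSne k hk) y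
    have hy0 : 0 < infDist y (S k) := by
      rw [hwd]
      refine dist_pos.mpr ?_
      rintro rfl
      exact hyS hw
    have hle := (hgreedy k hk).2 y hyX
    have hzero : infDist (x k) (S k) = 0 := infDist_zero_of_mem hmemk
    rw [hzero] at hle
    linarith
  have hinj : ∀ i j : ℕ, i < j → x i ≠ x j := by
    intro i j hij h
    exact hnotmem j (by omega) ⟨i, hij, h.symm ▸ rfl⟩
  -- greedy radii
  set r : ℕ → ℝ := fun k => infDist (x k) (S k) with hr
  have hrmono : ∀ j k : ℕ, 1 ≤ j → j ≤ k → r k ≤ r j := by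
    intro j k hj hjk
    induction k with
    | zero => omega
    | succ k ih =>
      rcases Nat.lt_or_ge j (k + 1) with h | h
      · have hk1 : 1 ≤ k := by omega
        have h1 : r (k + 1) ≤ r k := by
          have h2 : infDist (x (k + 1)) (S (k + 1)) ≤ infDist (x (k + 1)) (S k) :=
            infDist_le_infDist_of_subset (hSsub k (k + 1) (by omega)) (hSne k hk1)
          exact h2.trans ((hgreedy k hk1).2 (x (k + 1)) (hmem (k + 1)))
        exact h1.trans (ih (by omega))
      · have hj' : j = k + 1 := by omega
        subst hj'
        exact le_refl _
  -- Claim A : every pairwise distance in `S n` is at least `r (n-1)`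
  have hkeyA : ∀ i j : ℕ, i < j → j < n → r (n - 1) ≤ dist (x i) (x j) := by
    intro i j hij hjn
    have h1 : infDist (x j) (S j) ≤ dist (x j) (x i) := infDist_le_dist_of_mem ⟨i, hij, rfl⟩
    have h2 : r (n - 1) ≤ r j := hrmono j (n - 1) (by omega) (by omega)
    rw [dist_comm (x i) (x j)]
    exact h2.trans h1
  have hA : ∀ w ∈ {w : ℝ | ∃ p ∈ S n, ∃ q ∈ S n, p ≠ q ∧ w = dist p q}, r (n - 1) ≤ w := by
    rintro w ⟨p, ⟨i, hi, rfl⟩, q, ⟨j, hj, rfl⟩, hpq, rfl⟩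
    simp only [Set.mem_Iio] at hi hj
    rcases Nat.lt_trichotomy i j with h | h | h
    · exact hkeyA i j h hj
    · exact absurd (by rw [h]) hpq
    · rw [dist_comm]
      exact hkeyA j i h hi
  have hDne : {w : ℝ | ∃ p ∈ S n, ∃ q ∈ S n, p ≠ q ∧ w = dist p q}.Nonempty :=
    ⟨dist (x 0) (x 1), x 0, ⟨0, Set.mem_Iio.mpr (by omega), rfl⟩, x 1, ⟨1, Set.mem_Iio.mpr (by omega), rfl⟩,
      hinj 0 1 (by omega), rfl⟩
  have hAinf : r (n - 1) ≤ sInf {w : ℝ | ∃ p ∈ S n, ∃ q ∈ S n, p ≠ q ∧ w = dist p q} :=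
    le_csInf hDne hA
  -- Claim B : for every `n`-point design `Z ⊆ X`, `min-dist Z ≤ 2 r (n-1)` (pigeonhole)
  have hn1 : 1 ≤ n - 1 := by omega
  have hB : ∀ Z : Finset (EuclideanSpace ℝ (Fin d)), ↑Z ⊆ X → Z.card = n →
      sInf {w : ℝ | ∃ p ∈ (↑Z : Set (EuclideanSpace ℝ (Fin d))),
        ∃ q ∈ (↑Z : Set (EuclideanSpace ℝ (Fin d))), p ≠ q ∧ w = dist p q} ≤ 2 * r (n - 1) := by
    intro Z hZX hZc
    set F : Finset (EuclideanSpace ℝ (Fin d)) := Finset.image x (Finset.range (n - 1)) with hF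
    have hFcoe : (↑F : Set (EuclideanSpace ℝ (Fin d))) = S (n - 1) := by
      rw [hF, Finset.coe_image, Finset.coe_range]
    have hFcard : F.card < Z.card := by
      have h1 : F.card ≤ n - 1 := by
        rw [hF]
        exact (Finset.card_image_le).trans (by simp)
      omega
    set f : EuclideanSpace ℝ (Fin d) → EuclideanSpace ℝ (Fin d) := fun z =>
      if h : ∃ w ∈ S (n - 1), dist z w = infDist z (S (n - 1)) then h.choose else x 0 with hf
    have hfspec : ∀ z, f z ∈ F ∧ dist z (f z) = infDist z (S (n - 1)) := by
      intro z
      have hex : ∃ w ∈ S (n - 1), dist z w = infDist z (S (n - 1)) := by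
        obtain ⟨w, hw, hwd⟩ :=
          (hSfin (n - 1)).isCompact.exists_infDist_eq_dist (hSne (n - 1) hn1) z
        exact ⟨w, hw, hwd.symm⟩
      have : f z = hex.choose := by rw [hf]; exact dif_pos hex
      rw [this]
      refine ⟨?_, hex.choose_spec.2⟩
      have := hex.choose_spec.1
      exact Finset.mem_coe.mp (by rw [hFcoe]; exact this)
    obtain ⟨a, ha, b, hb, hab, hfab⟩ :=
      Finset.exists_ne_map_eq_of_card_lt_of_maps_to hFcard (fun z _ => (hfspec z).1)
    have hda : dist a (f a) ≤ r (n - 1) := by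
      rw [(hfspec a).2]
      exact (hgreedy (n - 1) hn1).2 a (hZX ha)
    have hdb : dist b (f b) ≤ r (n - 1) := by
      rw [(hfspec b).2]
      exact (hgreedy (n - 1) hn1).2 b (hZX hb)
    have hdd : dist a b ≤ 2 * r (n - 1) := by
      calc dist a b ≤ dist a (f a) + dist (f a) b := dist_triangle a (f a) b
        _ = dist a (f a) + dist b (f b) := by rw [hfab, dist_comm (f b) b]
        _ ≤ 2 * r (n - 1) := by linarith
    have hle : sInf {w : ℝ | ∃ p ∈ (↑Z : Set (EuclideanSpace ℝ (Fin d))),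
        ∃ q ∈ (↑Z : Set (EuclideanSpace ℝ (Fin d))), p ≠ q ∧ w = dist p q} ≤ dist a b :=
      csInf_le (distSet_bddBelow _) ⟨a, ha, b, hb, hab, rfl⟩
    linarith
  -- the greedy design as a finset
  set Z₀ : Finset (EuclideanSpace ℝ (Fin d)) := Finset.image x (Finset.range n) with hZ₀
  have hZ₀coe : (↑Z₀ : Set (EuclideanSpace ℝ (Fin d))) = S n := by
    rw [hZ₀, Finset.coe_image, Finset.coe_range]
  have hZ₀card : Z₀.card = n := by
    rw [hZ₀, Finset.card_image_of_injOn, Finset.card_range]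
    intro i hi j hj hij
    by_contra h
    rcases Nat.lt_or_ge i j with hlt | hge
    · exact hinj i j hlt hij
    · exact hinj j i (by omega) hij.symm
  have hZ₀X : (↑Z₀ : Set (EuclideanSpace ℝ (Fin d))) ⊆ X := by
    rw [hZ₀coe]
    rintro _ ⟨i, -, rfl⟩
    exact hmem i
  have hstarmem : packRad (S n) ∈ {w : ℝ | ∃ Z : Finset (EuclideanSpace ℝ (Fin d)),
      ↑Z ⊆ X ∧ Z.card = n ∧ w = packRad (↑Z : Set (EuclideanSpace ℝ (Fin d)))} :=
    ⟨Z₀, hZ₀X, hZ₀card, by rw [hZ₀coe]⟩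
  -- the sup-defining set is bounded above
  have hbdd : BddAbove {w : ℝ | ∃ Z : Finset (EuclideanSpace ℝ (Fin d)),
      ↑Z ⊆ X ∧ Z.card = n ∧ w = packRad (↑Z : Set (EuclideanSpace ℝ (Fin d)))} := by
    refine ⟨diam X / 2, ?_⟩
    rintro w ⟨Z, hZX, hZc, rfl⟩
    have h2 : 1 < Z.card := by omega
    obtain ⟨a, ha, b, hb, hab⟩ := Finset.one_lt_card.mp h2
    have h3 : sInf {w : ℝ | ∃ p ∈ (↑Z : Set (EuclideanSpace ℝ (Fin d))),
        ∃ q ∈ (↑Z : Set (EuclideanSpace ℝ (Fin d))), p ≠ q ∧ w = dist p q} ≤ dist a b :=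
      csInf_le (distSet_bddBelow _) ⟨a, ha, b, hb, hab, rfl⟩
    have h4 : dist a b ≤ diam X := dist_le_diam_of_mem hX.isBounded (hZX ha) (hZX hb)
    unfold packRad
    linarith
  constructor
  · -- lower bound
    have hsup : packRadStar X n ≤ 2 * packRad (S n) := by
      unfold packRadStar
      refine csSup_le ⟨packRad (S n), hstarmem⟩ ?_
      rintro w ⟨Z, hZX, hZc, rfl⟩
      have h1 := hB Z hZX hZc
      unfold packRad
      linarith
    linarith
  · exact le_csSup hbdd hstarmem
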